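/- Let P be a random variable on [0, P_u] with density f_P(x) = (2πλ/(η ρ₀^{2/η})) x^{2/η − 1} exp(−πλ (x/ρ₀)^{2/η}) / (1 − exp(−πλ (P_u/ρ₀)^{2/η})). Then for any α > 0, E[P^α] = ρ₀^α · γ(αη/2 + 1, πλ (P_u/ρ₀)^{2/η}) / ((πλ)^{αη/2} (1 − exp(−πλ (P_u/ρ₀)^{2/η}))), where γ(a,b) = ∫₀^b t^{a−1} e^{−t} dt is the lower incomplete gamma function. -/

import Mathlib

open Real MeasureTheory Set Filter Topology

/-- The lower incomplete gamma function `γ(a,b) = ∫₀^b t^(a-1) e^(-t) dt`. -/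
noncomputable def lowerIncGamma (a b : ℝ) : ℝ := ∫ t in (0:ℝ)..b, t ^ (a - 1) * exp (-t)

/-- Moments of the truncated channel-inversion transmit power. -/
theorem transmit_power_moments (lam η ρ₀ Pu α : ℝ)
    (hlam : 0 < lam) (hη : 0 < η) (hρ : 0 < ρ₀) (hPu : 0 < Pu) (hα : 0 < α) :
    (∫ x in (0:ℝ)..Pu,
        x ^ α *
          ((2 * π * lam * x ^ (2/η - 1) * exp (-(π * lam) * (x/ρ₀) ^ (2/η))) /
            (η * ρ₀ ^ (2/η) * (1 - exp (-(π * lam) * (Pu/ρ₀) ^ (2/η))))))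
      = ρ₀ ^ α * lowerIncGamma (α * η / 2 + 1) (π * lam * (Pu/ρ₀) ^ (2/η)) /
          ((π * lam) ^ (α * η / 2) * (1 - exp (-(π * lam) * (Pu/ρ₀) ^ (2/η)))) := by
  have hpl : 0 < π * lam := mul_pos pi_pos hlam
  set p : ℝ := 2 / η with hp_def
  have hp : 0 < p := div_pos two_pos hη
  have hρp : 0 < ρ₀ ^ p := rpow_pos_of_pos hρ p
  set K : ℝ := π * lam / ρ₀ ^ p with hK_def
  have hK : 0 < K := div_pos hpl hρp
  set b : ℝ := π * lam * (Pu/ρ₀) ^ p with hb_def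
  have hb : 0 < b := mul_pos hpl (rpow_pos_of_pos (div_pos hPu hρ) p)
  set D : ℝ := 1 - exp (-(π * lam) * (Pu/ρ₀) ^ p) with hD_def
  have hD : 0 < D := by
    rw [hD_def, sub_pos, exp_lt_one_iff]
    have := mul_pos hpl (rpow_pos_of_pos (div_pos hPu hρ) p)
    nlinarith
  have hDne : D ≠ 0 := hD.ne'
  -- key exponent identities
  have hpe : p * (α * η / 2) = α := by rw [hp_def]; field_simp
  have hbK : b = K * Pu ^ p := by
    rw [hb_def, hK_def, div_rpow hPu.le hρ.le]
    field_simp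
  -- the substituted integrand
  set f : ℝ → ℝ := (Ioc (0:ℝ) (Pu ^ p)).indicator
      (fun y => K * y ^ (α * η / 2) * exp (-(K * y))) with hf_def
  -- rewrite exp argument equality for x > 0
  have hexp : ∀ x : ℝ, 0 < x → -(π * lam) * (x/ρ₀) ^ p = -(K * x ^ p) := by
    intro x hx
    rw [div_rpow hx.le hρ.le, hK_def]
    field_simp
  -- Step 1: LHS as an integral over Ioi 0
  have step1 : (∫ x in (0:ℝ)..Pu,
        x ^ α * ((2 * π * lam * x ^ (p - 1) * exp (-(π * lam) * (x/ρ₀) ^ p)) /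
            (η * ρ₀ ^ p * D)))
      = D⁻¹ * ∫ x in Ioi (0:ℝ), (|p| * x ^ (p - 1)) • f (x ^ p) := by
    have hIoc : (∫ x in Ioi (0:ℝ), (|p| * x ^ (p - 1)) • f (x ^ p))
        = ∫ x in Ioc (0:ℝ) Pu, (|p| * x ^ (p - 1)) • f (x ^ p) := by
      rw [show Ioc (0:ℝ) Pu = Ioi 0 ∩ Ioc 0 Pu from
        (Set.inter_eq_right.mpr Ioc_subset_Ioi_self).symm,
        ← setIntegral_indicator (measurableSet_Ioc (a := (0:ℝ)) (b := Pu))]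
      refine setIntegral_congr_fun measurableSet_Ioi ?_
      intro x hx
      by_cases hxm : x ∈ Ioc (0:ℝ) Pu
      · rw [indicator_of_mem hxm]
      · rw [indicator_of_notMem hxm]
        have hxPu : Pu < x := by
          rcases lt_or_ge Pu x with h | h
          · exact h
          · exact absurd ⟨hx, h⟩ hxm
        have : f (x ^ p) = 0 := by
          apply indicator_of_notMem
          intro hmem
          exact absurd hmem.2 (not_le.mpr (rpow_lt_rpow hPu.le hxPu hp))
        simp only [this, smul_zero]
    rw [hIoc, intervalIntegral.integral_of_le hPu.le, ← integral_const_mul]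
    refine setIntegral_congr_fun measurableSet_Ioc ?_
    intro x hx
    have hx0 : 0 < x := hx.1
    have hmem : x ^ p ∈ Ioc (0:ℝ) (Pu ^ p) :=
      ⟨rpow_pos_of_pos hx0 p, rpow_le_rpow hx0.le hx.2 hp.le⟩
    rw [hf_def]
    simp only [indicator_of_mem hmem, smul_eq_mul]
    rw [← rpow_mul hx0.le, hpe, hexp x hx0, abs_of_pos hp, hK_def, hp_def]
    have hRne : ρ₀ ^ (2/η) ≠ 0 := (rpow_pos_of_pos hρ _).ne'
    field_simp [hη.ne', hRne, hDne]
  -- Step 2: apply the rpow substitution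
  have step2 : (∫ x in Ioi (0:ℝ), (|p| * x ^ (p - 1)) • f (x ^ p))
      = ∫ y in Ioi (0:ℝ), f y := integral_comp_rpow_Ioi f hp.ne'
  -- Step 3: unfold the indicator and rescale linearly
  have step3 : (∫ y in Ioi (0:ℝ), f y)
      = ρ₀ ^ α / (π * lam) ^ (α * η / 2) * lowerIncGamma (α * η / 2 + 1) b := by
    rw [hf_def, setIntegral_indicator measurableSet_Ioc,
      Set.inter_eq_right.mpr Ioc_subset_Ioi_self,
      ← intervalIntegral.integral_of_le (rpow_pos_of_pos hPu p).le]
    have hcongr : (∫ y in (0:ℝ)..Pu ^ p, K * y ^ (α * η / 2) * exp (-(K * y)))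
        = K ^ (-(α * η / 2)) * ∫ y in (0:ℝ)..Pu ^ p,
            K * ((K * y) ^ (α * η / 2) * exp (-(K * y))) := by
      rw [← intervalIntegral.integral_const_mul]
      refine intervalIntegral.integral_congr ?_
      intro y hy
      have hy0 : 0 ≤ y := by
        rw [uIcc_of_le (rpow_pos_of_pos hPu p).le] at hy
        exact hy.1
      simp only
      rw [mul_rpow hK.le hy0, rpow_neg hK.le]
      field_simp [(rpow_pos_of_pos hK (α * η / 2)).ne']
    rw [hcongr]
    have hscale : (∫ y in (0:ℝ)..Pu ^ p, K * ((K * y) ^ (α * η / 2) * exp (-(K * y))))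
        = ∫ t in (0:ℝ)..(K * Pu ^ p), t ^ (α * η / 2) * exp (-t) := by
      have := intervalIntegral.smul_integral_comp_mul_left
        (f := fun t => t ^ (α * η / 2) * exp (-t)) (a := (0:ℝ)) (b := Pu ^ p) K
      simpa [smul_eq_mul, mul_assoc, intervalIntegral.integral_const_mul] using this
    rw [hscale, ← hbK]
    have hγ : lowerIncGamma (α * η / 2 + 1) b
        = ∫ t in (0:ℝ)..b, t ^ (α * η / 2) * exp (-t) := by
      unfold lowerIncGamma
      norm_num
    rw [hγ]
    have h1 : (π * lam / ρ₀ ^ p) ^ (α * η / 2) = (π * lam) ^ (α * η / 2) / ρ₀ ^ α := by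
      rw [div_rpow hpl.le hρp.le, ← rpow_mul hρ.le, hpe]
    have hKρ : K ^ (-(α * η / 2)) = ρ₀ ^ α / (π * lam) ^ (α * η / 2) := by
      rw [hK_def, rpow_neg (div_pos hpl hρp).le, h1, inv_div]
    rw [hKρ]
  calc (∫ x in (0:ℝ)..Pu,
        x ^ α * ((2 * π * lam * x ^ (2/η - 1) * exp (-(π * lam) * (x/ρ₀) ^ (2/η))) /
            (η * ρ₀ ^ (2/η) * (1 - exp (-(π * lam) * (Pu/ρ₀) ^ (2/η))))))
      = D⁻¹ * ∫ x in Ioi (0:ℝ), (|p| * x ^ (p - 1)) • f (x ^ p) := step1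
    _ = D⁻¹ * (ρ₀ ^ α / (π * lam) ^ (α * η / 2) * lowerIncGamma (α * η / 2 + 1) b) := by
        rw [step2, step3]
    _ = ρ₀ ^ α * lowerIncGamma (α * η / 2 + 1) (π * lam * (Pu/ρ₀) ^ (2/η)) /
          ((π * lam) ^ (α * η / 2) * (1 - exp (-(π * lam) * (Pu/ρ₀) ^ (2/η)))) := by
        show D⁻¹ * (ρ₀ ^ α / (π * lam) ^ (α * η / 2) * lowerIncGamma (α * η / 2 + 1) b)
          = ρ₀ ^ α * lowerIncGamma (α * η / 2 + 1) b / ((π * lam) ^ (α * η / 2) * D)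
        rw [inv_mul_eq_div, div_mul_eq_mul_div, ← div_div]
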